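/- Let f : ℝ⁴ → ℝ be given by f(x,u,p,q) = (6p/u + 3/x)·q − 6p³/u² − 6p²/(x·u) − 6p/x² − 6u/x³ on the open set where x ≠ 0 and u ≠ 0. Then the functions a₁(x,u,p) = 1/(x·u²), a₂(x,u,p) = −2p/(x·u³) − 1/(x²·u²), a₃(x,u,p) = 1/(x·u²) satisfy on this set the auxiliary system: D_x a₃ = −(1/3) f_q a₃, D_x a₂ = (1/2)(a₂²/a₃) − (1/18) a₃ (2 f_q² + 9 f_p − 3 D_x f_q), and D_x a₁ = (a₂/a₃) a₁. -/

import Mathlib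

/-- Partial derivative with respect to the first variable `x`. -/
noncomputable def pX (g : ℝ → ℝ → ℝ → ℝ → ℝ) (x u p q : ℝ) : ℝ :=
  deriv (fun t => g t u p q) x

/-- Partial derivative with respect to the second variable `u`. -/
noncomputable def pU (g : ℝ → ℝ → ℝ → ℝ → ℝ) (x u p q : ℝ) : ℝ :=
  deriv (fun t => g x t p q) u

/-- Partial derivative with respect to the third variable `p`. -/
noncomputable def pP (g : ℝ → ℝ → ℝ → ℝ → ℝ) (x u p q : ℝ) : ℝ :=
  deriv (fun t => g x u t q) p

/-- Partial derivative with respect to the fourth variable `q`. -/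
noncomputable def pQ (g : ℝ → ℝ → ℝ → ℝ → ℝ) (x u p q : ℝ) : ℝ :=
  deriv (fun t => g x u p t) q

/-- The total derivative operator
`D_x = ∂/∂x + p ∂/∂u + q ∂/∂p + f ∂/∂q` associated with the ODE `u''' = f`. -/
noncomputable def Dx (f g : ℝ → ℝ → ℝ → ℝ → ℝ) : ℝ → ℝ → ℝ → ℝ → ℝ :=
  fun x u p q =>
    pX g x u p q + p * pU g x u p q + q * pP g x u p q + f x u p q * pQ g x u p q

/-- The right hand side of the nonlinear ODE of Example 3.1:
`u''' = (6u'/u + 3/x)u'' − 6u'³/u² − 6u'²/(xu) − 6u'/x² − 6u/x³`. -/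
noncomputable def f : ℝ → ℝ → ℝ → ℝ → ℝ := fun x u p q =>
  (6 * p / u + 3 / x) * q - 6 * p ^ 3 / u ^ 2 - 6 * p ^ 2 / (x * u)
    - 6 * p / x ^ 2 - 6 * u / x ^ 3

/-- Auxiliary function `a₁(x,u,p) = 1/(xu²)` (viewed as a function of `(x,u,p,q)`). -/
noncomputable def a1 : ℝ → ℝ → ℝ → ℝ → ℝ := fun x u _p _q => 1 / (x * u ^ 2)

/-- Auxiliary function `a₂(x,u,p) = −2p/(xu³) − 1/(x²u²)`. -/
noncomputable def a2 : ℝ → ℝ → ℝ → ℝ → ℝ := fun x u p _q =>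
  -(2 * p) / (x * u ^ 3) - 1 / (x ^ 2 * u ^ 2)

/-- Auxiliary function `a₃(x,u,p) = 1/(xu²)`. -/
noncomputable def a3 : ℝ → ℝ → ℝ → ℝ → ℝ := fun x u _p _q => 1 / (x * u ^ 2)

section AuxLemmas

variable (x u p q : ℝ)

lemma pQ_f : pQ f x u p q = 6 * p / u + 3 / x := by
  have h : HasDerivAt (fun t : ℝ => (6*p/u + 3/x)*t - 6*p^3/u^2 - 6*p^2/(x*u) - 6*p/x^2 - 6*u/x^3)
      (6*p/u + 3/x) q := by
    simpa using (((((hasDerivAt_id q).const_mul (6*p/u + 3/x)).sub_const (6*p^3/u^2)).sub_const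
      (6*p^2/(x*u))).sub_const (6*p/x^2)).sub_const (6*u/x^3)
  simp only [pQ, f]
  exact h.deriv

lemma pP_f : pP f x u p q = 6*q/u - 18*p^2/u^2 - 12*p/(x*u) - 6/x^2 := by
  have h : HasDerivAt (fun t : ℝ => (6*t/u + 3/x)*q - 6*t^3/u^2 - 6*t^2/(x*u) - 6*t/x^2 - 6*u/x^3)
      (6*q/u - 18*p^2/u^2 - 12*p/(x*u) - 6/x^2) p := by
    have h0 := (((((((hasDerivAt_id p).const_mul 6).div_const u).add_const (3/x)).mul_const q).sub
      (((hasDerivAt_pow 3 p).const_mul 6).div_const (u^2))).sub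
      (((hasDerivAt_pow 2 p).const_mul 6).div_const (x*u))).sub
      (((hasDerivAt_id p).const_mul 6).div_const (x^2)) |>.sub_const (6*u/x^3)
    refine h0.congr_deriv ?_
    push_cast; ring
  simp only [pP, f]
  exact h.deriv

lemma pX_a3 (hx : x ≠ 0) (hu : u ≠ 0) : pX a3 x u p q = -(1/(x^2*u^2)) := by
  have h : HasDerivAt (fun t : ℝ => 1/(t*u^2)) (-(1/(x^2*u^2))) x := by
    have h0 := (hasDerivAt_const x (1:ℝ)).div ((hasDerivAt_id x).mul_const (u^2))
      (mul_ne_zero hx (pow_ne_zero 2 hu))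
    refine h0.congr_deriv ?_
    simp only [id]
    field_simp; ring
  simp only [pX, a3]
  exact h.deriv

lemma pU_a3 (hx : x ≠ 0) (hu : u ≠ 0) : pU a3 x u p q = -(2/(x*u^3)) := by
  have h : HasDerivAt (fun t : ℝ => 1/(x*t^2)) (-(2/(x*u^3))) u := by
    have h0 := (hasDerivAt_const u (1:ℝ)).div ((hasDerivAt_pow 2 u).const_mul x)
      (mul_ne_zero hx (pow_ne_zero 2 hu))
    refine h0.congr_deriv ?_
    field_simp; ring
  simp only [pU, a3]
  exact h.deriv

lemma pP_a3 : pP a3 x u p q = 0 := by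
  simp [pP, a3]

lemma pQ_a3 : pQ a3 x u p q = 0 := by
  simp [pQ, a3]

lemma pX_a1 (hx : x ≠ 0) (hu : u ≠ 0) : pX a1 x u p q = -(1/(x^2*u^2)) :=
  pX_a3 x u p q hx hu

lemma pU_a1 (hx : x ≠ 0) (hu : u ≠ 0) : pU a1 x u p q = -(2/(x*u^3)) :=
  pU_a3 x u p q hx hu

lemma pP_a1 : pP a1 x u p q = 0 := pP_a3 x u p q

lemma pQ_a1 : pQ a1 x u p q = 0 := pQ_a3 x u p q

lemma pX_a2 (hx : x ≠ 0) (hu : u ≠ 0) :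
    pX a2 x u p q = 2*p/(x^2*u^3) + 2/(x^3*u^2) := by
  have h : HasDerivAt (fun t : ℝ => -(2*p)/(t*u^3) - 1/(t^2*u^2))
      (2*p/(x^2*u^3) + 2/(x^3*u^2)) x := by
    have h0 := ((hasDerivAt_const x (-(2*p))).div ((hasDerivAt_id x).mul_const (u^3))
      (mul_ne_zero hx (pow_ne_zero 3 hu))).sub
      ((hasDerivAt_const x (1:ℝ)).div ((hasDerivAt_pow 2 x).mul_const (u^2))
      (mul_ne_zero (pow_ne_zero 2 hx) (pow_ne_zero 2 hu)))
    refine h0.congr_deriv ?_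
    simp only [id]
    field_simp; ring
  simp only [pX, a2]
  exact h.deriv

lemma pU_a2 (hx : x ≠ 0) (hu : u ≠ 0) :
    pU a2 x u p q = 6*p/(x*u^4) + 2/(x^2*u^3) := by
  have h : HasDerivAt (fun t : ℝ => -(2*p)/(x*t^3) - 1/(x^2*t^2))
      (6*p/(x*u^4) + 2/(x^2*u^3)) u := by
    have h0 := ((hasDerivAt_const u (-(2*p))).div ((hasDerivAt_pow 3 u).const_mul x)
      (mul_ne_zero hx (pow_ne_zero 3 hu))).sub
      ((hasDerivAt_const u (1:ℝ)).div ((hasDerivAt_pow 2 u).const_mul (x^2))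
      (mul_ne_zero (pow_ne_zero 2 hx) (pow_ne_zero 2 hu)))
    refine h0.congr_deriv ?_
    field_simp; ring
  simp only [pU, a2]
  exact h.deriv

lemma pP_a2 : pP a2 x u p q = -(2/(x*u^3)) := by
  have h : HasDerivAt (fun t : ℝ => -(2*t)/(x*u^3) - 1/(x^2*u^2)) (-(2/(x*u^3))) p := by
    have h0 := (((hasDerivAt_id p).const_mul 2).neg.div_const (x*u^3)).sub_const (1/(x^2*u^2))
    refine h0.congr_deriv ?_
    ring
  simp only [pP, a2]
  exact h.deriv

lemma pQ_a2 : pQ a2 x u p q = 0 := by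
  simp [pQ, a2]

lemma pX_pQf (hx : x ≠ 0) : pX (pQ f) x u p q = -(3/x^2) := by
  have h : HasDerivAt (fun t : ℝ => 6*p/u + 3/t) (-(3/x^2)) x := by
    have h0 := (hasDerivAt_const x (6*p/u)).add
      ((hasDerivAt_const x (3:ℝ)).div (hasDerivAt_id x) hx)
    refine h0.congr_deriv ?_
    simp only [id]
    field_simp; ring
  simp only [pX, pQ_f]
  exact h.deriv

lemma pU_pQf (hu : u ≠ 0) : pU (pQ f) x u p q = -(6*p/u^2) := by
  have h : HasDerivAt (fun t : ℝ => 6*p/t + 3/x) (-(6*p/u^2)) u := by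
    have h0 := ((hasDerivAt_const u (6*p)).div (hasDerivAt_id u) hu).add_const (3/x)
    refine h0.congr_deriv ?_
    simp only [id]
    field_simp; ring
  simp only [pU, pQ_f]
  exact h.deriv

lemma pP_pQf : pP (pQ f) x u p q = 6/u := by
  have h : HasDerivAt (fun t : ℝ => 6*t/u + 3/x) (6/u) p := by
    have h0 := (((hasDerivAt_id p).const_mul 6).div_const u).add_const (3/x)
    refine h0.congr_deriv ?_
    ring
  simp only [pP, pQ_f]
  exact h.deriv

lemma pQ_pQf : pQ (pQ f) x u p q = 0 := by
  rw [pQ]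
  simp only [pQ_f]
  simp

end AuxLemmas

/-- For `f` of Example 3.1, the functions `a₁, a₂, a₃` satisfy the auxiliary system
`Dₓ a₃ = −(1/3) f_q a₃`, `Dₓ a₂ = (1/2) a₂²/a₃ − (1/18) a₃ (2 f_q² + 9 f_p − 3 Dₓ f_q)`,
`Dₓ a₁ = (a₂/a₃) a₁` on the set `x ≠ 0`, `u ≠ 0`. -/
theorem auxiliary_system_example1 :
    ∀ x u p q : ℝ, x ≠ 0 → u ≠ 0 →
      Dx f a3 x u p q = -(1 / 3) * pQ f x u p q * a3 x u p q ∧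
      Dx f a2 x u p q = (1 / 2) * (a2 x u p q) ^ 2 / a3 x u p q
        - (1 / 18) * a3 x u p q
            * (2 * (pQ f x u p q) ^ 2 + 9 * pP f x u p q - 3 * Dx f (pQ f) x u p q) ∧
      Dx f a1 x u p q = a2 x u p q / a3 x u p q * a1 x u p q := by
  intro x u p q hx hu
  have hx2 := pow_ne_zero 2 hx
  refine ⟨?_, ?_, ?_⟩
  · simp only [Dx, pX_a3 x u p q hx hu, pU_a3 x u p q hx hu, pP_a3, pQ_a3, pQ_f, a3, f]
    field_simp
    ring
  · simp only [Dx, pX_a2 x u p q hx hu, pU_a2 x u p q hx hu, pP_a2, pQ_a2,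
      pX_pQf x u p q hx, pU_pQf x u p q hu, pP_pQf, pQ_pQf, pQ_f, pP_f, a2, a3, f]
    field_simp
    ring
  · simp only [Dx, pX_a1 x u p q hx hu, pU_a1 x u p q hx hu, pP_a1, pQ_a1, a1, a2, a3, f]
    field_simp
    ring
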